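/- Let k ≥ 0 be an integer, let 1 < p < ∞, let 0 < ε < 1, and let m > k. Then ∫_{|ω|<ε} |ω|^{−pk} ((1/(2π)) M_m(ω/2 + π))^{p/2} dω ≤ 2^{−p(1/2+k)+1} · (c_m/π)^{p/2} · (ε/2)^{pm−pk+1}. -/

import Mathlib

open MeasureTheory Filter
open scoped Topology

/-- `c_m = (∫_0^π sin^{2m-1} u du)⁻¹`. -/
noncomputable def cm (m : ℕ) : ℝ :=
  (∫ u in (0:ℝ)..Real.pi, Real.sin u ^ (2 * m - 1))⁻¹

/-- `M_m(ω) = 1 - c_m ∫_0^ω sin^{2m-1} u du`, i.e. `|H_m(ω)|²` for the Daubechies filter. -/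
noncomputable def Mm (m : ℕ) (ω : ℝ) : ℝ :=
  1 - cm m * ∫ u in (0:ℝ)..ω, Real.sin u ^ (2 * m - 1)

open intervalIntegral

lemma sinpow_intable (n : ℕ) (a b : ℝ) :
    IntervalIntegrable (fun u => Real.sin u ^ n) volume a b :=
  (Real.continuous_sin.pow n).intervalIntegrable a b

lemma Im_pos (m : ℕ) (hm : 1 ≤ m) :
    0 < ∫ u in (0:ℝ)..Real.pi, Real.sin u ^ (2 * m - 1) := by
  apply intervalIntegral.intervalIntegral_pos_of_pos_on (sinpow_intable _ _ _)
  · intro x hx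
    exact pow_pos (Real.sin_pos_of_pos_of_lt_pi hx.1 hx.2) _
  · exact Real.pi_pos

lemma cm_pos (m : ℕ) (hm : 1 ≤ m) : 0 < cm m := inv_pos.mpr (Im_pos m hm)

lemma int_odd (m : ℕ) (hm : 1 ≤ m) (y : ℝ) :
    ∫ u in (0:ℝ)..(-y), Real.sin u ^ (2*m-1) = ∫ u in (0:ℝ)..y, Real.sin u ^ (2*m-1) := by
  have hodd : Odd (2*m-1) := ⟨m-1, by omega⟩
  have h := intervalIntegral.integral_comp_neg (a := (0:ℝ)) (b := y)
    (fun u => Real.sin u ^ (2*m-1))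
  simp only [Real.sin_neg, hodd.neg_pow, neg_zero] at h
  have h1 : ∫ u in y..(0:ℝ), Real.sin u ^ (2*m-1) = -∫ u in (0:ℝ)..y, Real.sin u ^ (2*m-1) :=
    intervalIntegral.integral_symm _ _
  have h2 : ∫ u in (-y)..(0:ℝ), Real.sin u ^ (2*m-1) = -∫ u in (0:ℝ)..(-y), Real.sin u ^ (2*m-1) :=
    intervalIntegral.integral_symm _ _
  rw [intervalIntegral.integral_neg] at h
  linarith [h, h1, h2]

lemma Mm_eq (m : ℕ) (hm : 1 ≤ m) (x : ℝ) :
    Mm m (x + Real.pi) = cm m * ∫ u in (0:ℝ)..x, Real.sin u ^ (2*m-1) := by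
  have hodd : Odd (2*m-1) := ⟨m-1, by omega⟩
  have hsplit := intervalIntegral.integral_add_adjacent_intervals
    (a := (0:ℝ)) (b := Real.pi) (c := x + Real.pi)
    (sinpow_intable (2*m-1) _ _) (sinpow_intable (2*m-1) _ _)
  have hshift := intervalIntegral.integral_comp_add_right (a := (0:ℝ)) (b := x)
    (fun u => Real.sin u ^ (2*m-1)) Real.pi
  simp only [Real.sin_add_pi, hodd.neg_pow, zero_add] at hshift
  rw [intervalIntegral.integral_neg] at hshift
  have hI := Im_pos m hm
  rw [Mm, ← hsplit, ← hshift, cm]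
  field_simp
  ring

lemma int_nonneg (m : ℕ) (x : ℝ) (hx0 : 0 ≤ x) (hx1 : x ≤ 1) :
    0 ≤ ∫ u in (0:ℝ)..x, Real.sin u ^ (2*m-1) := by
  apply intervalIntegral.integral_nonneg hx0
  intro u hu
  exact pow_nonneg (Real.sin_nonneg_of_nonneg_of_le_pi hu.1
    (by linarith [Real.pi_gt_three, hu.2])) _

lemma int_bound (m : ℕ) (hm : 1 ≤ m) (x : ℝ) (hx0 : 0 ≤ x) (hx1 : x ≤ 1) :
    (∫ u in (0:ℝ)..x, Real.sin u ^ (2*m-1)) ≤ x ^ (2*m) := by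
  have h1 : (∫ u in (0:ℝ)..x, Real.sin u ^ (2*m-1)) ≤ ∫ _u in (0:ℝ)..x, x ^ (2*m-1) := by
    apply intervalIntegral.integral_mono_on hx0 (sinpow_intable _ _ _) intervalIntegrable_const
    intro u hu
    have h0 : 0 ≤ Real.sin u :=
      Real.sin_nonneg_of_nonneg_of_le_pi hu.1 (by linarith [Real.pi_gt_three, hu.2])
    exact pow_le_pow_left₀ h0 (le_trans (Real.sin_le hu.1) hu.2) _
  rw [intervalIntegral.integral_const, smul_eq_mul, sub_zero] at h1
  have h2 : x * x^(2*m-1) = x^(2*m) := by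
    rw [mul_comm, ← pow_succ]
    congr 1
    omega
  linarith

lemma int_abs (m : ℕ) (hm : 1 ≤ m) (x : ℝ) :
    ∫ u in (0:ℝ)..x, Real.sin u ^ (2*m-1) = ∫ u in (0:ℝ)..|x|, Real.sin u ^ (2*m-1) := by
  rcases le_or_gt 0 x with h | h
  · rw [abs_of_nonneg h]
  · rw [abs_of_neg h, ← int_odd m hm (-x), neg_neg]

theorem stmt4 (k : ℕ) (p : ℝ) (hp : 1 < p) (ε : ℝ) (hε0 : 0 < ε) (hε1 : ε < 1)
    (m : ℕ) (hm : k < m) :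
    ∫ ω in {ω : ℝ | |ω| < ε},
        |ω| ^ (-(p * (k : ℝ))) * ((1 / (2 * Real.pi)) * Mm m (ω / 2 + Real.pi)) ^ (p / 2) ≤
      2 ^ (-p * (1 / 2 + (k : ℝ)) + 1) * (cm m / Real.pi) ^ (p / 2) *
        (ε / 2) ^ (p * (m : ℝ) - p * (k : ℝ) + 1) := by
  have hm1 : 1 ≤ m := by omega
  have hπ := Real.pi_pos
  have hcm := cm_pos m hm1
  have hp0 : 0 < p := by linarith
  have hS : 0 ≤ cm m / Real.pi := le_of_lt (div_pos hcm hπ)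
  set S : ℝ := cm m / Real.pi with hSdef
  set q : ℝ := p * (m : ℝ) - p * (k : ℝ) with hq
  have hq1 : 1 < q := by
    have hkm : (k : ℝ) + 1 ≤ (m : ℝ) := by exact_mod_cast hm
    nlinarith
  set C : ℝ := (cm m / (2 * Real.pi)) ^ (p/2) * (2:ℝ) ^ (-(p * (m:ℝ))) with hC
  have hCnn : 0 ≤ C :=
    mul_nonneg (Real.rpow_nonneg (by positivity) _) (Real.rpow_nonneg (by norm_num) _)
  have hset : {ω : ℝ | |ω| < ε} = Set.Ioo (-ε) ε := by
    ext ω; simp [abs_lt]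
  rw [hset]
  -- pointwise facts on the set
  have hfacts : ∀ ω ∈ Set.Ioo (-ε) ε,
      (0 ≤ (1 / (2 * Real.pi)) * Mm m (ω / 2 + Real.pi)) ∧
      ((1 / (2 * Real.pi)) * Mm m (ω / 2 + Real.pi) ≤ (cm m / (2*Real.pi)) * (|ω|/2) ^ (2*m)) := by
    intro ω hω
    have habs : |ω| < ε := by rw [abs_lt]; exact ⟨hω.1, hω.2⟩
    have hx0 : 0 ≤ |ω| / 2 := by positivity
    have hx1 : |ω| / 2 ≤ 1 := by linarith
    have hMeq : Mm m (ω/2 + Real.pi)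
        = cm m * ∫ u in (0:ℝ)..(|ω|/2), Real.sin u ^ (2*m-1) := by
      rw [Mm_eq m hm1 (ω/2), int_abs m hm1 (ω/2), abs_div, abs_two]
    have hBnn := int_nonneg m (|ω|/2) hx0 hx1
    have hBle := int_bound m hm1 (|ω|/2) hx0 hx1
    constructor
    · rw [hMeq]
      positivity
    · rw [hMeq]
      have h1 : (1 / (2*Real.pi)) * (cm m * ∫ u in (0:ℝ)..(|ω|/2), Real.sin u ^ (2*m-1))
          ≤ (1 / (2*Real.pi)) * (cm m * (|ω|/2) ^ (2*m)) := by
        apply mul_le_mul_of_nonneg_left _ (by positivity)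
        exact mul_le_mul_of_nonneg_left hBle (le_of_lt hcm)
      calc (1 / (2*Real.pi)) * (cm m * ∫ u in (0:ℝ)..(|ω|/2), Real.sin u ^ (2*m-1))
          ≤ (1 / (2*Real.pi)) * (cm m * (|ω|/2) ^ (2*m)) := h1
        _ = (cm m / (2*Real.pi)) * (|ω|/2) ^ (2*m) := by ring
  -- pointwise bound by C * |ω|^q
  have hpt : ∀ ω ∈ Set.Ioo (-ε) ε, ω ≠ 0 →
      |ω| ^ (-(p * (k : ℝ))) * ((1 / (2 * Real.pi)) * Mm m (ω / 2 + Real.pi)) ^ (p / 2)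
        ≤ C * |ω| ^ q := by
    intro ω hω hω0
    obtain ⟨ha0, hab⟩ := hfacts ω hω
    have hωpos : 0 < |ω| := abs_pos.mpr hω0
    have step1 : ((1 / (2 * Real.pi)) * Mm m (ω / 2 + Real.pi)) ^ (p / 2)
        ≤ ((cm m / (2*Real.pi)) * (|ω|/2) ^ (2*m)) ^ (p/2) :=
      Real.rpow_le_rpow ha0 hab (by positivity)
    have step2 : ((cm m / (2*Real.pi)) * (|ω|/2) ^ (2*m)) ^ (p/2)
        = (cm m / (2*Real.pi)) ^ (p/2) * (|ω|/2) ^ (p * (m:ℝ)) := by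
      rw [Real.mul_rpow (by positivity) (by positivity), ← Real.rpow_natCast (|ω|/2) (2*m),
        ← Real.rpow_mul (by positivity)]
      congr 1
      push_cast
      ring
    have step3 : (|ω|/2) ^ (p * (m:ℝ)) = |ω| ^ (p * (m:ℝ)) * (2:ℝ) ^ (-(p * (m:ℝ))) := by
      rw [Real.div_rpow (abs_nonneg ω) (by norm_num), Real.rpow_neg (by norm_num)]
      ring
    have step4 : |ω| ^ (-(p * (k:ℝ))) * |ω| ^ (p * (m:ℝ)) = |ω| ^ q := by
      rw [← Real.rpow_add hωpos]
      congr 1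
      rw [hq]; ring
    calc |ω| ^ (-(p * (k : ℝ))) * ((1 / (2 * Real.pi)) * Mm m (ω / 2 + Real.pi)) ^ (p / 2)
        ≤ |ω| ^ (-(p * (k : ℝ))) * ((cm m / (2*Real.pi)) * (|ω|/2) ^ (2*m)) ^ (p/2) :=
          mul_le_mul_of_nonneg_left step1 (Real.rpow_nonneg (abs_nonneg ω) _)
      _ = (cm m / (2*Real.pi)) ^ (p/2) * (2:ℝ) ^ (-(p * (m:ℝ)))
            * (|ω| ^ (-(p * (k:ℝ))) * |ω| ^ (p * (m:ℝ))) := by rw [step2, step3]; ring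
      _ = C * |ω| ^ q := by rw [step4, hC]
  -- integrability of the majorant
  have hgcont : Continuous (fun ω : ℝ => C * |ω| ^ q) := by
    apply continuous_const.mul
    apply Continuous.rpow_const continuous_abs
    intro x
    right; linarith
  have hgint : IntegrableOn (fun ω : ℝ => C * |ω| ^ q) (Set.Ioo (-ε) ε) :=
    (hgcont.integrableOn_Icc).mono_set Set.Ioo_subset_Icc_self
  -- comparison
  have hne : ∀ᵐ ω : ℝ, ω ≠ 0 := by
    rw [ae_iff]
    simp
  have hmem := ae_restrict_mem (μ := volume) (measurableSet_Ioo : MeasurableSet (Set.Ioo (-ε) ε))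
  have hmono : (∫ ω in Set.Ioo (-ε) ε,
      |ω| ^ (-(p * (k : ℝ))) * ((1 / (2 * Real.pi)) * Mm m (ω / 2 + Real.pi)) ^ (p / 2))
      ≤ ∫ ω in Set.Ioo (-ε) ε, C * |ω| ^ q := by
    refine integral_mono_of_nonneg ?_ hgint ?_
    · filter_upwards [hmem] with ω hω
      exact mul_nonneg (Real.rpow_nonneg (abs_nonneg ω) _)
        (Real.rpow_nonneg (hfacts ω hω).1 _)
    · filter_upwards [hmem, ae_restrict_of_ae hne] with ω hω hω0
      exact hpt ω hω hω0
  -- compute the majorant integral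
  have habs_cont : Continuous (fun ω : ℝ => |ω| ^ q) := by
    apply Continuous.rpow_const continuous_abs
    intro x; right; linarith
  have hint : ∀ a b : ℝ, IntervalIntegrable (fun ω : ℝ => |ω| ^ q) volume a b :=
    fun a b => habs_cont.intervalIntegrable a b
  have hval : (∫ ω in Set.Ioo (-ε) ε, C * |ω| ^ q) = C * (2 * (ε ^ (q+1) / (q+1))) := by
    rw [← integral_Ioc_eq_integral_Ioo, ← intervalIntegral.integral_of_le (by linarith : -ε ≤ ε),
      intervalIntegral.integral_const_mul]
    congr 1
    have hsplit := intervalIntegral.integral_add_adjacent_intervals (a := -ε) (b := 0) (c := ε)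
      (hint _ _) (hint _ _)
    have hneg : (∫ ω in (-ε)..(0:ℝ), |ω| ^ q) = ∫ ω in (0:ℝ)..ε, |ω| ^ q := by
      have h := intervalIntegral.integral_comp_neg (a := (0:ℝ)) (b := ε)
        (fun ω : ℝ => |ω| ^ q)
      simp only [abs_neg, neg_zero] at h
      rw [h]
    have hpos : (∫ ω in (0:ℝ)..ε, |ω| ^ q) = ε ^ (q+1) / (q+1) := by
      rw [intervalIntegral.integral_congr (g := fun ω : ℝ => ω ^ q)
        (by
          intro x hx
          rw [Set.uIcc_of_le (le_of_lt hε0)] at hx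
          simp [abs_of_nonneg hx.1])]
      rw [integral_rpow (Or.inl (by linarith)), Real.zero_rpow (by linarith)]
      ring
    rw [← hsplit, hneg, hpos]
    ring
  -- final constants arithmetic
  have two_pos' : (0:ℝ) < 2 := by norm_num
  have e1 : (2:ℝ) ^ (-p * (1/2 + (k:ℝ)) + 1) / (2:ℝ) ^ (q + 1)
      = (2:ℝ) ^ (-(p/2)) * (2:ℝ) ^ (-(p * (m:ℝ))) := by
    rw [← Real.rpow_sub two_pos', ← Real.rpow_add two_pos']
    congr 1
    rw [hq]; ring
  have e2 : C = S ^ (p/2) * (2:ℝ) ^ (-(p/2)) * (2:ℝ) ^ (-(p * (m:ℝ))) := by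
    have hd : cm m / (2 * Real.pi) = S / 2 := by rw [hSdef]; ring
    rw [hC, hd, Real.div_rpow hS (by norm_num), div_eq_mul_inv,
      ← Real.rpow_neg (by norm_num : (0:ℝ) ≤ 2)]
  have eR : (2:ℝ) ^ (-p * (1/2 + (k:ℝ)) + 1) * S ^ (p/2) * (ε/2) ^ (q + 1)
      = S ^ (p/2) * (2:ℝ) ^ (-(p/2)) * (2:ℝ) ^ (-(p * (m:ℝ))) * ε ^ (q+1) := by
    rw [Real.div_rpow (le_of_lt hε0) (by norm_num : (0:ℝ) ≤ 2)]
    calc (2:ℝ) ^ (-p * (1/2 + (k:ℝ)) + 1) * S ^ (p/2) * (ε ^ (q+1) / (2:ℝ) ^ (q+1))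
        = S ^ (p/2) * ε ^ (q+1) * ((2:ℝ) ^ (-p * (1/2 + (k:ℝ)) + 1) / (2:ℝ) ^ (q+1)) := by ring
      _ = S ^ (p/2) * ε ^ (q+1) * ((2:ℝ) ^ (-(p/2)) * (2:ℝ) ^ (-(p * (m:ℝ)))) := by rw [e1]
      _ = _ := by ring
  have hfac : 2 / (q + 1) ≤ 1 := by
    rw [div_le_one (by linarith)]
    linarith
  have hKnn : 0 ≤ S ^ (p/2) * (2:ℝ) ^ (-(p/2)) * (2:ℝ) ^ (-(p * (m:ℝ))) * ε ^ (q+1) := by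
    have := Real.rpow_nonneg hS (p/2)
    have := Real.rpow_nonneg (le_of_lt hε0) (q+1)
    have := Real.rpow_nonneg (by norm_num : (0:ℝ) ≤ 2) (-(p/2))
    have := Real.rpow_nonneg (by norm_num : (0:ℝ) ≤ 2) (-(p * (m:ℝ)))
    positivity
  calc (∫ ω in Set.Ioo (-ε) ε,
        |ω| ^ (-(p * (k : ℝ))) * ((1 / (2 * Real.pi)) * Mm m (ω / 2 + Real.pi)) ^ (p / 2))
      ≤ ∫ ω in Set.Ioo (-ε) ε, C * |ω| ^ q := hmono
    _ = C * (2 * (ε ^ (q+1) / (q+1))) := hval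
    _ = (S ^ (p/2) * (2:ℝ) ^ (-(p/2)) * (2:ℝ) ^ (-(p * (m:ℝ))) * ε ^ (q+1)) * (2 / (q+1)) := by
        rw [e2]; ring
    _ ≤ (S ^ (p/2) * (2:ℝ) ^ (-(p/2)) * (2:ℝ) ^ (-(p * (m:ℝ))) * ε ^ (q+1)) * 1 :=
        mul_le_mul_of_nonneg_left hfac hKnn
    _ = 2 ^ (-p * (1/2 + (k:ℝ)) + 1) * S ^ (p/2) * (ε/2) ^ (q + 1) := by rw [eR]; ring
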